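/- With the setup below, for every integer 1 ≤ i ≤ n − 1 write the polynomial h_{rnk,i} uniquely as h_{rnk,i}(x) = Σ_{t=0}^{p−1} f_{i,t}(x)^p x^t with f_{i,t} ∈ k[x]. Then deg(f_{i,t}) ≤ d_{σ(i)} − ⌊d_i / p⌋ for all 0 ≤ t ≤ p − 1, and equality holds for t = (−d_i − 1) mod p ∈ {0, ..., p−1}. -/

import Mathlib

open Polynomial

private lemma coeff_pow_char_aux {k : Type*} [Field k] {p : ℕ} (hp : p.Prime) [CharP k p]
    (g : Polynomial k) (m : ℕ) :
    (g ^ p).coeff m = if p ∣ m then (g.coeff (m / p)) ^ p else 0 := by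
  haveI : Fact p.Prime := ⟨hp⟩
  rw [← Polynomial.map_frobenius_expand, coeff_map, coeff_expand hp.pos]
  split_ifs <;> simp [frobenius_def, hp.ne_zero]

set_option maxHeartbeats 1600000 in
/-- Write `h_rnk = f ^ ε i * hmin i / hmin (σ i) ^ p` uniquely as
`h_rnk = ∑_{t=0}^{p-1} (F t)^p * x^t`.  Then `deg (F t) ≤ d (σ i) - ⌊d i / p⌋` for all
`0 ≤ t ≤ p - 1`, and equality holds (with `F t` nonzero) for `t = (-d i - 1) mod p`. -/
theorem stmt_8 {k : Type*} [Field k] [IsAlgClosed k]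
    (p : ℕ) (hp : p.Prime) [CharP k p]
    (n : ℕ) (hn : 2 ≤ n) (hnp : Nat.Coprime n p)
    (B : Finset k) (hB : B.Nonempty)
    (e : k → ℕ) (he : ∀ α ∈ B, 0 < e α ∧ e α < n)
    (hsum : n ∣ ∑ α ∈ B, e α)
    (f : Polynomial k) (hf : f = ∏ α ∈ B, (X - C α) ^ e α)
    (hmin : ℕ → Polynomial k)
    (hhmin : ∀ j, hmin j = ∏ α ∈ B, (X - C α) ^ (j * e α / n))
    (d : ℕ → ℤ)
    (hd : ∀ j, d j = (∑ α ∈ B, ((j : ℤ) * (e α : ℤ)) % (n : ℤ)) / (n : ℤ) - 1)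
    (i : ℕ) (hi1 : 1 ≤ i) (hi2 : i ≤ n - 1)
    (σi : ℕ) (hσ1 : 1 ≤ σi) (hσ2 : σi ≤ n - 1) (hσ3 : p * σi ≡ i [MOD n])
    (εi : ℕ) (hε1 : εi ≤ p - 1) (hε2 : p ∣ n * εi + i)
    (hdvd : hmin σi ^ p ∣ f ^ εi * hmin i)
    (F : ℕ → Polynomial k)
    (hF : (f ^ εi * hmin i) /ₘ hmin σi ^ p = ∑ t ∈ Finset.range p, F t ^ p * X ^ t) :
    (∀ t < p, ((F t).natDegree : ℤ) ≤ d σi - Int.fdiv (d i) p) ∧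
    F ((-(d i) - 1) % (p : ℤ)).toNat ≠ 0 ∧
    (((F ((-(d i) - 1) % (p : ℤ)).toNat).natDegree : ℤ)
      = d σi - Int.fdiv (d i) p) := by
  have hp2 : 2 ≤ p := hp.two_le
  have hppos : (0:ℤ) < p := by exact_mod_cast hp.pos
  have hnpos : (0:ℤ) < n := by exact_mod_cast (by omega : 0 < n)
  have hnne : (n:ℤ) ≠ 0 := by positivity
  -- monicity and degrees
  have hfm : f.Monic := by
    rw [hf]; exact monic_prod_of_monic _ _ fun α _ => (monic_X_sub_C α).pow _
  have hminm : ∀ j, (hmin j).Monic := fun j => by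
    rw [hhmin]; exact monic_prod_of_monic _ _ fun α _ => (monic_X_sub_C α).pow _
  set S : ℕ := ∑ α ∈ B, e α with hS
  have hdegf : f.natDegree = S := by
    rw [hf, natDegree_prod _ _ (fun α _ => pow_ne_zero _ (X_sub_C_ne_zero α))]
    simp [natDegree_pow, hS]
  have hdeghmin : ∀ j, (hmin j).natDegree = ∑ α ∈ B, j * e α / n := fun j => by
    rw [hhmin, natDegree_prod _ _ (fun α _ => pow_ne_zero _ (X_sub_C_ne_zero α))]
    simp [natDegree_pow]
  -- key1 : n * deg hmin j + n * (d j + 1) = j * S  (in ℤ)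
  have key1 : ∀ j : ℕ, (n:ℤ) * ((hmin j).natDegree : ℤ) + (n:ℤ) * (d j + 1) = (j:ℤ) * S := by
    intro j
    have hterm : ∀ α ∈ B, (n:ℤ) * ((j:ℤ) * (e α : ℤ) / (n:ℤ))
        = (j:ℤ) * (e α : ℤ) - ((j:ℤ) * (e α : ℤ)) % (n:ℤ) := by
      intro α _
      have := Int.mul_ediv_add_emod ((j:ℤ) * (e α : ℤ)) (n:ℤ)
      linarith
    have hsplit : (n:ℤ) * ((hmin j).natDegree : ℤ)
        = (j:ℤ) * S - ∑ α ∈ B, ((j : ℤ) * (e α : ℤ)) % (n : ℤ) := by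
      rw [hdeghmin j]
      push_cast [hS]
      rw [Finset.mul_sum, Finset.mul_sum, ← Finset.sum_sub_distrib]
      exact Finset.sum_congr rfl hterm
    have hdvdsum : (n:ℤ) ∣ ∑ α ∈ B, ((j : ℤ) * (e α : ℤ)) % (n : ℤ) := by
      have h2 : (∑ α ∈ B, ((j : ℤ) * (e α : ℤ)) % (n : ℤ))
          = (j:ℤ) * S - (n:ℤ) * ((hmin j).natDegree : ℤ) := by linarith [hsplit]
      rw [h2]
      exact dvd_sub ((Int.natCast_dvd_natCast.mpr hsum).mul_left _) (dvd_mul_right _ _)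
    have h3 : (n:ℤ) * (d j + 1) = ∑ α ∈ B, ((j : ℤ) * (e α : ℤ)) % (n : ℤ) := by
      rw [hd j, sub_add_cancel]
      exact Int.mul_ediv_cancel' hdvdsum
    rw [h3, hsplit]; ring
  clear_value S
  -- key2 : p * σi = n * εi + i  (in ℤ)
  have key2 : (p:ℤ) * σi = (n:ℤ) * εi + i := by
    have hσdvd : (n:ℤ) ∣ (i:ℤ) - (p:ℤ) * σi := by
      have := (Nat.modEq_iff_dvd (n := n)).mp hσ3
      push_cast at this ⊢
      exact this
    obtain ⟨m, hm⟩ := hσdvd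
    have hiZ : (i:ℤ) < n := by exact_mod_cast (by omega : i < n)
    have hσZ : (σi:ℤ) < n := by exact_mod_cast (by omega : σi < n)
    have hσZ1 : (1:ℤ) ≤ σi := by exact_mod_cast hσ1
    have hiZ1 : (1:ℤ) ≤ i := by exact_mod_cast hi1
    have h4 : (n:ℤ) * (-m) = (p:ℤ) * σi - i := by rw [mul_neg]; linarith [hm]
    have hm0 : 0 ≤ -m := by
      by_contra hc
      push_neg at hc
      have h1 : m ≥ 1 := by omega
      have h5 : (n:ℤ) * 1 ≤ n * m := by
        exact mul_le_mul_of_nonneg_left h1 (le_of_lt hnpos)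
      have h3 : (p:ℤ) ≤ p * σi := by nlinarith
      linarith [hm]
    have hmp : -m < p := by
      have h1 : (p:ℤ) * σi ≤ p * (n - 1) := by nlinarith
      have h5 : (p:ℤ) * (n-1) = p * n - p := by ring
      have h6 : (n:ℤ) * (-m) < n * p := by
        rw [h4]; rw [mul_comm (n:ℤ) (p:ℤ)]; linarith
      exact lt_of_mul_lt_mul_left h6 (le_of_lt hnpos)
    have hdvdpm : (p:ℤ) ∣ (n:ℤ) * (-m - εi) := by
      have h1 : (p:ℤ) ∣ (n:ℤ) * εi + i := by exact_mod_cast Int.natCast_dvd_natCast.mpr hε2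
      have h2 : (p:ℤ) ∣ (n:ℤ) * (-m) + i := ⟨(σi:ℤ), by linarith [h4]⟩
      have h3 := h2.sub h1
      rw [show (n:ℤ) * (-m - εi) = ((n:ℤ) * (-m) + i) - ((n:ℤ) * εi + i) by ring]
      exact h3
    have hpm : (p:ℤ) ∣ (-m - εi) := by
      rcases Int.Prime.dvd_mul' hp hdvdpm with h | h
      · exfalso
        have hpn : p ∣ n := by exact_mod_cast h
        have h9 : p ∣ 1 := hnp ▸ Nat.dvd_gcd hpn dvd_rfl
        have := Nat.dvd_one.mp h9
        omega
      · exact h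
    have hεZ : (εi:ℤ) ≤ p - 1 := by exact_mod_cast (by omega : (εi:ℤ) ≤ (p:ℤ) - 1)
    have hεZ0 : (0:ℤ) ≤ εi := Int.natCast_nonneg _
    have hme : -m - εi = 0 := by
      refine Int.eq_zero_of_abs_lt_dvd hpm ?_
      rw [abs_lt]; constructor <;> linarith
    have h7 : (n:ℤ) * εi = n * (-m) := by rw [(by linarith : (εi:ℤ) = -m)]
    linarith [h4, h7]
  -- the quotient h
  set h : Polynomial k := (f ^ εi * hmin i) /ₘ hmin σi ^ p with hhdef
  have hmonσ : (hmin σi ^ p).Monic := (hminm σi).pow p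
  have hmul : hmin σi ^ p * h = f ^ εi * hmin i := by
    have := modByMonic_add_div (f ^ εi * hmin i) (hmin σi ^ p)
    rwa [(modByMonic_eq_zero_iff_dvd hmonσ).mpr hdvd, zero_add] at this
  clear_value h
  have hne : f ^ εi * hmin i ≠ 0 := ((hfm.pow εi).mul (hminm i)).ne_zero
  have hh0 : h ≠ 0 := by
    intro hz; rw [hz, mul_zero] at hmul; exact hne hmul.symm
  have hdegh : p * (hmin σi).natDegree + h.natDegree = εi * S + (hmin i).natDegree := by
    have h1 := congrArg natDegree hmul
    rw [natDegree_mul hmonσ.ne_zero hh0,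
      natDegree_mul (pow_ne_zero _ hfm.ne_zero) (hminm i).ne_zero,
      natDegree_pow, natDegree_pow, hdegf] at h1
    omega
  -- degree of h in ℤ
  have hD : (h.natDegree : ℤ) = p * d σi - d i + p - 1 := by
    have h1 : (n:ℤ) * (h.natDegree : ℤ) = (n:ℤ) * ((p:ℤ) * d σi - d i + p - 1) := by
      have h2 : (p:ℤ) * ((hmin σi).natDegree : ℤ) + (h.natDegree : ℤ)
          = (εi:ℤ) * S + ((hmin i).natDegree : ℤ) := by exact_mod_cast hdegh
      have k1 := key1 i
      have k2 := key1 σi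
      linear_combination (n:ℤ) * h2 + k1 - (p:ℤ) * k2 - (S:ℤ) * key2
    exact mul_left_cancel₀ hnne h1
  -- arithmetic for M and t0
  set t0 : ℤ := (-(d i) - 1) % (p : ℤ) with ht0def
  have ht0a : 0 ≤ t0 := Int.emod_nonneg _ (by positivity)
  have ht0b : t0 < p := Int.emod_lt_of_pos _ hppos
  have hfd : Int.fdiv (d i) p = d i / p := Int.fdiv_eq_ediv_of_nonneg _ (by positivity)
  have hemod := Int.mul_ediv_add_emod (d i) (p:ℤ)
  have hmodbd := Int.emod_nonneg (d i) (by positivity : (p:ℤ) ≠ 0)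
  have hmodbd2 := Int.emod_lt_of_pos (d i) hppos
  have ht0eq : t0 = (p:ℤ) - 1 - (d i) % p := by
    have hkey : -(d i) - 1 = ((p:ℤ) - 1 - (d i) % p) + (p:ℤ) * (-(d i / p) - 1) := by
      linarith
    rw [ht0def, hkey, Int.add_mul_emod_self_left,
      Int.emod_eq_of_lt (by linarith) (by linarith)]
  set M : ℤ := d σi - Int.fdiv (d i) p with hMdef
  have hDM : (h.natDegree : ℤ) = p * M + t0 := by
    rw [hD, ht0eq, hMdef, hfd]
    linear_combination hemod
  have hM0 : 0 ≤ M := by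
    have h1 : (p:ℤ) * (-1) < p * M := by
      have h2 : (0:ℤ) ≤ (h.natDegree : ℤ) := Int.natCast_nonneg _
      linarith
    have := lt_of_mul_lt_mul_left h1 (le_of_lt hppos)
    linarith
  set Mn : ℕ := M.toNat with hMndef
  set t0n : ℕ := t0.toNat with ht0ndef
  have hMnc : (Mn:ℤ) = M := Int.toNat_of_nonneg hM0
  have ht0nc : (t0n:ℤ) = t0 := Int.toNat_of_nonneg ht0a
  clear_value t0 M Mn t0n
  have ht0nlt : t0n < p := by
    have : (t0n:ℤ) < p := by rw [ht0nc]; exact ht0b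
    exact_mod_cast this
  have hdegnat : h.natDegree = p * Mn + t0n := by
    have hc : (h.natDegree : ℤ) = (p:ℤ) * (Mn:ℤ) + (t0n:ℤ) := by
      rw [hMnc, ht0nc]; exact hDM
    exact_mod_cast hc
  -- coefficient computation
  have hcoeff : ∀ t < p, ∀ q : ℕ, h.coeff (p * q + t) = ((F t).coeff q) ^ p := by
    intro t ht q
    rw [hF, finset_sum_coeff]
    rw [Finset.sum_eq_single t]
    · rw [coeff_mul_X_pow', if_pos (Nat.le_add_left t (p*q)), Nat.add_sub_cancel,
        coeff_pow_char_aux hp, if_pos (dvd_mul_right p q), Nat.mul_div_cancel_left q hp.pos]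
    · intro s hs hst
      rw [coeff_mul_X_pow']
      split_ifs with hle
      · rw [coeff_pow_char_aux hp, if_neg]
        intro hdvd'
        obtain ⟨c, hc⟩ := hdvd'
        have h1 : p * q + t = p * c + s := by omega
        have h2 : (p * q + t) % p = (p * c + s) % p := by rw [h1]
        rw [Nat.mul_add_mod, Nat.mul_add_mod, Nat.mod_eq_of_lt ht,
          Nat.mod_eq_of_lt (Finset.mem_range.mp hs)] at h2
        exact hst h2.symm
      · rfl
    · intro hnot; exact absurd (Finset.mem_range.mpr ht) hnot
  -- bound
  have hbound : ∀ t < p, (F t).natDegree ≤ Mn := by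
    intro t ht
    by_cases h0 : F t = 0
    · simp [h0]
    have hc := hcoeff t ht (F t).natDegree
    have hne' : h.coeff (p * (F t).natDegree + t) ≠ 0 := by
      rw [hc]; exact pow_ne_zero _ (mt leadingCoeff_eq_zero.mp h0)
    have hle := le_natDegree_of_ne_zero hne'
    rw [hdegnat] at hle
    have h5 : p * (F t).natDegree < p * (Mn + 1) := by
      calc p * (F t).natDegree ≤ p * (F t).natDegree + t := Nat.le_add_right _ _
        _ ≤ p * Mn + t0n := hle
        _ < p * Mn + p := by omega
        _ = p * (Mn + 1) := by ring
    exact Nat.lt_succ_iff.mp (Nat.lt_of_mul_lt_mul_left h5)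
  -- equality at t0n
  have hlead : h.coeff (p * Mn + t0n) ≠ 0 := by
    rw [← hdegnat, coeff_natDegree]
    exact leadingCoeff_ne_zero.mpr hh0
  have hcc := hcoeff t0n ht0nlt Mn
  have hcoeffne : (F t0n).coeff Mn ≠ 0 := by
    intro hz
    apply hlead
    rw [hcc, hz, zero_pow hp.pos.ne']
  have hFne : F t0n ≠ 0 := fun hz => hcoeffne (by simp [hz])
  have hge : Mn ≤ (F t0n).natDegree := le_natDegree_of_ne_zero hcoeffne
  have heq : (F t0n).natDegree = Mn := le_antisymm (hbound _ ht0nlt) hge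
  refine ⟨fun t ht => ?_, hFne, ?_⟩
  · rw [← hMnc]; exact_mod_cast hbound t ht
  · rw [heq, hMnc]
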